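/- Let f : X → Y be a map between metric spaces such that for every κ ∈ (0,1) there is ε_0 > 0 with d_Y(f(x),f(x')) < d_X(x,x')^κ whenever d_X(x,x') < ε_0. Let φ, ψ be Hausdorff functions such that for some κ ∈ (0,1) and ε_1 > 0 one has ψ(ε^κ) < φ(ε) for all ε ∈ (0,ε_1). Then H^ψ(f(X)) ≤ H^φ(X) for the associated generalized Hausdorff measures. -/
import Mathlib


open scoped ENNReal
open Filter Topology MeasureTheory Metric

/-- Hausdorff functions: continuous nondecreasing, vanishing exactly at `0`. -/
def IsHausdorffFn (φ : ℝ → ℝ) : Prop :=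
  ContinuousOn φ (Set.Ici 0) ∧ MonotoneOn φ (Set.Ici 0) ∧ φ 0 = 0 ∧ ∀ ε > 0, 0 < φ ε

/-- The generalized `φ`-Hausdorff measure of a subset of a metric space, via countable
covers by open balls of radii at most `ε`, letting `ε → 0`. -/
noncomputable def Hmeas {Z : Type*} [MetricSpace Z] (φ : ℝ → ℝ) (S : Set Z) : ℝ≥0∞ :=
  ⨆ (ε : ℝ) (_ : 0 < ε),
    ⨅ (c : ℕ → Z × ℝ)
      (_ : (∀ i, 0 ≤ (c i).2 ∧ (c i).2 ≤ ε) ∧ S ⊆ ⋃ i, ball (c i).1 (c i).2),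
      ∑' i, ENNReal.ofReal (φ (c i).2)

/-- The generalized `φ`-packing premeasure of a subset of a metric space, via countable
packs of disjoint open balls centered in the set, of radii at most `ε`, letting `ε → 0`. -/
noncomputable def Pmeas0 {Z : Type*} [MetricSpace Z] (φ : ℝ → ℝ) (S : Set Z) : ℝ≥0∞ :=
  ⨅ (ε : ℝ) (_ : 0 < ε),
    ⨆ (c : ℕ → Z × ℝ)
      (_ : (∀ i, (c i).1 ∈ S ∧ 0 ≤ (c i).2 ∧ (c i).2 ≤ ε) ∧
        Pairwise fun i j => Disjoint (ball (c i).1 (c i).2) (ball (c j).1 (c j).2)),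
      ∑' i, ENNReal.ofReal (φ (c i).2)

/-- The generalized `φ`-packing measure. -/
noncomputable def Pmeas {Z : Type*} [MetricSpace Z] (φ : ℝ → ℝ) (S : Set Z) : ℝ≥0∞ :=
  ⨅ (F : ℕ → Set Z) (_ : S ⊆ ⋃ m, F m), ∑' m, Pmeas0 φ (F m)

/-- If `f` satisfies the quasi-Lipschitz estimate `d(f x, f x') < d(x,x')^κ` at small
distances for every `κ ∈ (0,1)`, and `ψ(ε^κ) < φ(ε)` for small `ε` and some `κ ∈ (0,1)`,
then `H^ψ(f(X)) ≤ H^φ(X)`. -/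
theorem stmt16 {X Y : Type*} [MetricSpace X] [MetricSpace Y] (f : X → Y)
    (hf : ∀ κ : ℝ, 0 < κ → κ < 1 → ∃ ε₀ > 0, ∀ x x' : X, 0 < dist x x' →
      dist x x' < ε₀ → dist (f x) (f x') < dist x x' ^ κ)
    (φ ψ : ℝ → ℝ) (hφ : IsHausdorffFn φ) (hψ : IsHausdorffFn ψ)
    (hκ : ∃ κ : ℝ, 0 < κ ∧ κ < 1 ∧ ∃ ε₁ > 0, ∀ ε : ℝ, 0 < ε → ε < ε₁ → ψ (ε ^ κ) < φ ε) :
    Hmeas ψ (f '' Set.univ) ≤ Hmeas φ (Set.univ : Set X) := by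
  obtain ⟨κ, hκ0, hκ1, ε₁, hε₁, hψφ⟩ := hκ
  obtain ⟨ε₀, hε₀, hf'⟩ := hf κ hκ0 hκ1
  refine iSup₂_le fun δ hδ => ?_
  set ε : ℝ := min (δ ^ (1/κ)) (min ε₀ ε₁) / 2 with hε
  have hεpos : 0 < ε := by
    apply div_pos _ (by norm_num)
    exact lt_min (Real.rpow_pos_of_pos hδ _) (lt_min hε₀ hε₁)
  have hεε₀ : ε < ε₀ := by
    calc ε ≤ ε₀ / 2 := by
            apply div_le_div_of_nonneg_right _ (by norm_num)
            exact le_trans (min_le_right _ _) (min_le_left _ _)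
      _ < ε₀ := by linarith
  have hεε₁ : ε < ε₁ := by
    calc ε ≤ ε₁ / 2 := by
            apply div_le_div_of_nonneg_right _ (by norm_num)
            exact le_trans (min_le_right _ _) (min_le_right _ _)
      _ < ε₁ := by linarith
  have hεδ : ε ≤ δ ^ (1/κ) := by
    calc ε ≤ δ ^ (1/κ) / 2 := by
            apply div_le_div_of_nonneg_right _ (by norm_num)
            exact min_le_left _ _
      _ ≤ δ ^ (1/κ) := by
            have := (Real.rpow_pos_of_pos hδ (1/κ)).le
            linarith
  refine le_trans ?_ (le_iSup₂ (f := fun (ε' : ℝ) (_ : 0 < ε') =>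
    ⨅ (c : ℕ → X × ℝ)
      (_ : (∀ i, 0 ≤ (c i).2 ∧ (c i).2 ≤ ε') ∧ Set.univ ⊆ ⋃ i, ball (c i).1 (c i).2),
      ∑' i, ENNReal.ofReal (φ (c i).2)) ε hεpos)
  refine le_iInf₂ fun c hc => ?_
  obtain ⟨hcr, hccov⟩ := hc
  refine le_trans (iInf₂_le (fun i => (f (c i).1, (c i).2 ^ κ)) ?_) ?_
  · constructor
    · intro i
      refine ⟨Real.rpow_nonneg (hcr i).1 κ, ?_⟩
      calc (c i).2 ^ κ ≤ (δ ^ (1/κ)) ^ κ :=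
            Real.rpow_le_rpow (hcr i).1 (le_trans (hcr i).2 hεδ) hκ0.le
        _ = δ := by
            rw [← Real.rpow_mul hδ.le, one_div, inv_mul_cancel₀ hκ0.ne', Real.rpow_one]
    · rintro y ⟨x, -, rfl⟩
      obtain ⟨_, ⟨i, rfl⟩, hxi⟩ := hccov (Set.mem_univ x)
      simp only [mem_ball] at hxi ⊢
      refine Set.mem_iUnion.2 ⟨i, ?_⟩
      simp only [mem_ball]
      rcases eq_or_lt_of_le (dist_nonneg (x := x) (y := (c i).1)) with h0 | h0
      · have : x = (c i).1 := by rwa [eq_comm, dist_eq_zero] at h0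
        subst this
        simp only [dist_self]
        exact Real.rpow_pos_of_pos (by simpa using hxi) κ
      · have hlt : dist x (c i).1 < ε₀ :=
          lt_of_lt_of_le hxi (le_trans (hcr i).2 hεε₀.le)
        calc dist (f x) (f (c i).1) < dist x (c i).1 ^ κ := hf' x (c i).1 h0 hlt
          _ < (c i).2 ^ κ := Real.rpow_lt_rpow dist_nonneg hxi hκ0
  · refine ENNReal.tsum_le_tsum fun i => ENNReal.ofReal_le_ofReal ?_
    show ψ ((c i).2 ^ κ) ≤ φ (c i).2
    rcases eq_or_lt_of_le (hcr i).1 with h0 | h0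
    · rw [← h0, Real.zero_rpow hκ0.ne', hψ.2.2.1, hφ.2.2.1]
    · exact (hψφ _ h0 (lt_of_le_of_lt (hcr i).2 hεε₁)).le
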